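/- The contextuality scenario generated by all n-qubit product rays is KS-colourable: the map cₙ defined on product unit vectors of (ℂ²)^{⊗n} by cₙ(ψ) = 1 if ψ is all-north and cₙ(ψ) = 0 otherwise is a KS-colouring of the set of all product unit vectors, i.e., every orthonormal basis of (ℂ²)^{⊗n} consisting of product vectors contains exactly one vector with cₙ-value 1, and no two mutually orthogonal product unit vectors both have cₙ-value 1. -/

import Mathlib

open scoped InnerProductSpace
open MeasureTheory

noncomputable section

abbrev Qubit : Type := EuclideanSpace ℂ (Fin 2)
abbrev NQubit (n : ℕ) : Type := EuclideanSpace ℂ (Fin n → Fin 2)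

/-- The product vector `ψ₁ ⊗ ⋯ ⊗ ψₙ` in `(ℂ²)^{⊗n}`, modelled concretely as
`EuclideanSpace ℂ (Fin n → Fin 2)`; its inner products satisfy
`⟨tens ψ, tens χ⟩ = ∏ j, ⟨ψ j, χ j⟩`. -/
noncomputable def tens {n : ℕ} (ψ : Fin n → Qubit) : NQubit n :=
  WithLp.toLp 2 (fun f : Fin n → Fin 2 => ∏ j, ψ j (f j))

/-- A vector of `(ℂ²)^{⊗n}` is a product vector if it is of the form `ψ₁ ⊗ ⋯ ⊗ ψₙ`. -/
def IsProduct {n : ℕ} (v : NQubit n) : Prop := ∃ ψ : Fin n → Qubit, v = tens ψ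

/-- A finite set of vectors forming an orthonormal basis of `H`. -/
def IsONBasis {H : Type*} [NormedAddCommGroup H] [InnerProductSpace ℂ H]
    (B : Finset H) : Prop :=
  Orthonormal ℂ (fun v : B => (v : H)) ∧ Submodule.span ℂ (B : Set H) = ⊤

/-- A KS-colouring of a set `S` of unit vectors: a `{0,1}`-valued map (modelled as a
predicate, `c v` meaning value `1`) such that every orthonormal basis contained in `S`
has exactly one element of value `1`, and no two mutually orthogonal elements of `S`
both have value `1`. -/
def IsKSColouring {H : Type*} [NormedAddCommGroup H] [InnerProductSpace ℂ H]
    (S : Set H) (c : H → Prop) : Prop :=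
  (∀ B : Finset H, ↑B ⊆ S → IsONBasis B → ∃! v, v ∈ B ∧ c v) ∧
  (∀ ψ ∈ S, ∀ χ ∈ S, ⟪ψ, χ⟫_ℂ = 0 → ¬(c ψ ∧ c χ))

/-- First coordinate of the Bloch vector of a qubit vector. -/
def blochX (ψ : Qubit) : ℝ := 2 * ((starRingEnd ℂ) (ψ 0) * ψ 1).re
/-- Second coordinate of the Bloch vector of a qubit vector. -/
def blochY (ψ : Qubit) : ℝ := 2 * ((starRingEnd ℂ) (ψ 0) * ψ 1).im
/-- Third coordinate of the Bloch vector of a qubit vector. -/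
def blochZ (ψ : Qubit) : ℝ := Complex.normSq (ψ 0) - Complex.normSq (ψ 1)

/-- A qubit unit vector is north if its Bloch vector `(x,y,z)` satisfies `z > 0`, or
`z = 0 ∧ y < 0`, or `z = 0 ∧ y = 0 ∧ x > 0`. -/
def IsNorth (ψ : Qubit) : Prop :=
  0 < blochZ ψ ∨ (blochZ ψ = 0 ∧ blochY ψ < 0) ∨
    (blochZ ψ = 0 ∧ blochY ψ = 0 ∧ 0 < blochX ψ)

/-- An `n`-qubit product vector is all-north if it factors as a product of north
qubit vectors. -/
def AllNorth {n : ℕ} (v : NQubit n) : Prop :=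
  ∃ ψ : Fin n → Qubit, v = tens ψ ∧ ∀ j, IsNorth (ψ j)

open scoped ComplexConjugate

/-! ### Auxiliary lemmas -/

section Aux

lemma inner_qubit (ψ χ : Qubit) : ⟪ψ, χ⟫_ℂ = conj (ψ 0) * χ 0 + conj (ψ 1) * χ 1 := by
  simp [PiLp.inner_apply, RCLike.inner_apply, Fin.sum_univ_two]; ring

lemma normSq_qubit {ψ : Qubit} (h : ‖ψ‖ = 1) :
    Complex.normSq (ψ 0) + Complex.normSq (ψ 1) = 1 := by
  have h1 : ⟪ψ, ψ⟫_ℂ = (1:ℂ) := by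
    rw [inner_self_eq_norm_sq_to_K, h]; norm_num
  rw [inner_qubit] at h1
  have := congrArg Complex.re h1
  simpa [Complex.add_re, Complex.normSq_apply, Complex.mul_re, Complex.conj_re,
    Complex.conj_im] using this

lemma bloch_antipodal {ψ χ : Qubit} (hψ : ‖ψ‖ = 1) (hχ : ‖χ‖ = 1)
    (h : ⟪ψ, χ⟫_ℂ = 0) :
    blochX χ = -blochX ψ ∧ blochY χ = -blochY ψ ∧ blochZ χ = -blochZ ψ := by
  rw [inner_qubit] at h
  have hψ' := normSq_qubit hψ
  have hχ' := normSq_qubit hχ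
  have h3 : ψ 0 * conj (ψ 0) + ψ 1 * conj (ψ 1) = 1 := by
    rw [Complex.mul_conj, Complex.mul_conj, ← Complex.ofReal_add, hψ']; norm_num
  have h4 : χ 0 * conj (χ 0) + χ 1 * conj (χ 1) = 1 := by
    rw [Complex.mul_conj, Complex.mul_conj, ← Complex.ofReal_add, hχ']; norm_num
  have h2 : ψ 0 * conj (χ 0) + ψ 1 * conj (χ 1) = 0 := by
    have := congrArg (starRingEnd ℂ) h
    simpa [map_add, map_mul] using this
  have key : conj (χ 0) * χ 1 = -(conj (ψ 0) * ψ 1) := by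
    linear_combination (-(conj (χ 0) * χ 1)) * h3 - (conj (ψ 0) * ψ 1) * h4 +
      (conj (ψ 0) * χ 1) * h2 + (ψ 1 * conj (χ 0)) * h
  have keyz : Complex.normSq (χ 0) = Complex.normSq (ψ 1) := by
    have h5 : Complex.normSq (ψ 0) * Complex.normSq (χ 0)
        = Complex.normSq (ψ 1) * Complex.normSq (χ 1) := by
      have habs : conj (ψ 0) * χ 0 = - (conj (ψ 1) * χ 1) := by linear_combination h
      have := congrArg Complex.normSq habs
      simpa [Complex.normSq_mul, Complex.normSq_conj, Complex.normSq_neg] using this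
    linear_combination h5 + Complex.normSq (ψ 1) * hχ' - Complex.normSq (χ 0) * hψ'
  refine ⟨?_, ?_, ?_⟩
  · simp only [blochX, key, Complex.neg_re]; ring
  · simp only [blochY, key, Complex.neg_im]; ring
  · simp only [blochZ]; nlinarith [hψ', hχ', keyz]

lemma bloch_sum_sq {ψ : Qubit} (h : ‖ψ‖ = 1) :
    blochX ψ ^ 2 + blochY ψ ^ 2 + blochZ ψ ^ 2 = 1 := by
  have h1 := normSq_qubit h
  simp only [blochX, blochY, blochZ, Complex.normSq_apply, Complex.mul_re, Complex.mul_im,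
    Complex.conj_re, Complex.conj_im] at *
  nlinarith [h1]

lemma north_aux {x y z : ℝ} (h : x^2+y^2+z^2 = 1) :
    (0 < z ∨ (z = 0 ∧ y < 0) ∨ (z = 0 ∧ y = 0 ∧ 0 < x)) ↔
    ¬ (0 < -z ∨ (-z = 0 ∧ -y < 0) ∨ (-z = 0 ∧ -y = 0 ∧ 0 < -x)) := by
  constructor
  · rintro (h1|⟨h1,h2⟩|⟨h1,h2,h3⟩) (g1|⟨g1,g2⟩|⟨g1,g2,g3⟩) <;> linarith
  · intro hn
    by_contra hc
    push_neg at hn hc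
    obtain ⟨z1, hy1, hx1⟩ := hc
    obtain ⟨z2, hy2, hx2⟩ := hn
    have hz : z = 0 := le_antisymm z1 (by linarith)
    have hy : y = 0 := le_antisymm (by linarith [hy2 (by linarith : -z = 0)]) (hy1 hz)
    have hx : x = 0 := le_antisymm (hx1 hz hy)
      (by linarith [hx2 (by linarith : -z = 0) (by linarith : -y = 0)])
    rw [hx, hy, hz] at h; norm_num at h

lemma north_xor {ψ χ : Qubit} (hψ : ‖ψ‖ = 1) (hχ : ‖χ‖ = 1)
    (h : ⟪ψ, χ⟫_ℂ = 0) : IsNorth ψ ↔ ¬ IsNorth χ := by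
  obtain ⟨hx, hy, hz⟩ := bloch_antipodal hψ hχ h
  have hs := bloch_sum_sq hψ
  unfold IsNorth
  rw [hx, hy, hz]
  exact north_aux hs

lemma isNorth_smul {c : ℂ} (hc : c ≠ 0) (ψ : Qubit) : IsNorth (c • ψ) ↔ IsNorth ψ := by
  have hcc : conj c * c = (Complex.normSq c : ℂ) := by rw [mul_comm, Complex.mul_conj]
  have key : conj (c * ψ 0) * (c * ψ 1) = (Complex.normSq c : ℂ) * (conj (ψ 0) * ψ 1) := by
    rw [map_mul]; linear_combination (conj (ψ 0) * ψ 1) * hcc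
  have hX : blochX (c • ψ) = Complex.normSq c * blochX ψ := by
    simp only [blochX, PiLp.smul_apply, smul_eq_mul, key, Complex.re_ofReal_mul]; ring
  have hY : blochY (c • ψ) = Complex.normSq c * blochY ψ := by
    simp only [blochY, PiLp.smul_apply, smul_eq_mul, key, Complex.im_ofReal_mul]; ring
  have hZ : blochZ (c • ψ) = Complex.normSq c * blochZ ψ := by
    simp only [blochZ, PiLp.smul_apply, smul_eq_mul, Complex.normSq_mul]; ring
  have hr : 0 < Complex.normSq c := Complex.normSq_pos.mpr hc
  unfold IsNorth
  rw [hX, hY, hZ]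
  set r := Complex.normSq c
  have e1 : ∀ w : ℝ, (0 < r * w) ↔ 0 < w := fun w => by
    constructor <;> intro h <;> nlinarith
  have e2 : ∀ w : ℝ, (r * w = 0) ↔ w = 0 := fun w => by
    simp [mul_eq_zero, hr.ne']
  have e3 : ∀ w : ℝ, (r * w < 0) ↔ w < 0 := fun w => by
    constructor <;> intro h <;> nlinarith
  rw [e1, e2, e3, e2, e1]

lemma inner_tens {n : ℕ} (ψ χ : Fin n → Qubit) :
    ⟪tens ψ, tens χ⟫_ℂ = ∏ j, ⟪ψ j, χ j⟫_ℂ := by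
  simp only [PiLp.inner_apply, RCLike.inner_apply, tens, PiLp.toLp_apply]
  rw [Finset.prod_univ_sum]
  rw [← Fintype.piFinset_univ]
  exact Finset.sum_congr rfl fun f _ => by rw [map_prod, ← Finset.prod_mul_distrib]

lemma norm_tens {n : ℕ} (ψ : Fin n → Qubit) : ‖tens ψ‖ = ∏ j, ‖ψ j‖ := by
  have h := inner_tens ψ ψ
  simp only [inner_self_eq_norm_sq_to_K] at h
  norm_cast at h
  rw [Finset.prod_pow] at h
  nlinarith [norm_nonneg (tens ψ),
    Finset.prod_nonneg (fun j (_ : j ∈ Finset.univ) => norm_nonneg (ψ j))]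

lemma tens_smul {n : ℕ} (c : Fin n → ℂ) (ψ : Fin n → Qubit) :
    tens (fun j => c j • ψ j) = (∏ j, c j) • tens ψ := by
  ext f
  simp only [tens, PiLp.smul_apply, smul_eq_mul, PiLp.toLp_apply]
  rw [← Finset.prod_mul_distrib]

lemma exists_unit_factors {n : ℕ} {v : NQubit n} (hp : IsProduct v) (hn : ‖v‖ = 1) :
    ∃ ψ : Fin n → Qubit, v = tens ψ ∧ ∀ j, ‖ψ j‖ = 1 := by
  obtain ⟨χ, rfl⟩ := hp
  rw [norm_tens] at hn
  have hne : ∀ j, ‖χ j‖ ≠ 0 := by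
    intro j hj
    rw [Finset.prod_eq_zero (Finset.mem_univ j) hj] at hn
    norm_num at hn
  refine ⟨fun j => ((‖χ j‖ : ℂ))⁻¹ • χ j, ?_, ?_⟩
  · rw [tens_smul]
    have : (∏ j, ((‖χ j‖ : ℂ))⁻¹) = ((∏ j, ‖χ j‖ : ℝ) : ℂ)⁻¹ := by
      push_cast
      rw [← Finset.prod_inv_distrib]
    rw [this, hn]
    norm_num
  · intro j
    rw [norm_smul]
    simp [hne j, norm_inv]

lemma qubit_coord_ne_zero {φ : Qubit} (h : φ ≠ 0) : ∃ i, φ i ≠ 0 := by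
  by_contra hc
  push_neg at hc
  exact h (by ext i; simpa using hc i)

lemma tens_eq_zero_of_factor {n : ℕ} {χ : Fin n → Qubit} {k : Fin n} (h : χ k = 0) :
    tens χ = 0 := by
  ext f
  simp only [tens, PiLp.toLp_apply]
  rw [Finset.prod_eq_zero (Finset.mem_univ k) (by simp [h])]
  rfl

lemma factor_proportional {n : ℕ} {ψ χ : Fin n → Qubit} (h : tens ψ = tens χ)
    (hnz : tens χ ≠ 0) (j : Fin n) : ∃ c : ℂ, c ≠ 0 ∧ ψ j = c • χ j := by
  have hχ : ∀ k, χ k ≠ 0 := fun k hk => hnz (tens_eq_zero_of_factor hk)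
  have hg : ∀ k, ∃ i, χ k i ≠ 0 := fun k => qubit_coord_ne_zero (hχ k)
  choose g hgne using hg
  set P : ℂ := ∏ k ∈ Finset.univ.erase j, ψ k (g k) with hP
  set Q : ℂ := ∏ k ∈ Finset.univ.erase j, χ k (g k) with hQ
  have hQne : Q ≠ 0 := Finset.prod_ne_zero_iff.mpr fun k _ => hgne k
  have key : ∀ i : Fin 2, ψ j i * P = χ j i * Q := by
    intro i
    have h1 := congrArg (fun v : NQubit n => v (Function.update g j i)) h
    simp only [tens, PiLp.toLp_apply] at h1
    rw [← Finset.mul_prod_erase Finset.univ _ (Finset.mem_univ j),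
        ← Finset.mul_prod_erase Finset.univ _ (Finset.mem_univ j)] at h1
    rw [Function.update_self] at h1
    calc ψ j i * P = ψ j i * ∏ k ∈ Finset.univ.erase j, ψ k (Function.update g j i k) := by
          rw [hP]; congr 1; exact Finset.prod_congr rfl fun k hk => by
            rw [Function.update_of_ne (Finset.ne_of_mem_erase hk)]
      _ = χ j i * ∏ k ∈ Finset.univ.erase j, χ k (Function.update g j i k) := h1
      _ = χ j i * Q := by
          rw [hQ]; congr 1; exact Finset.prod_congr rfl fun k hk => by
            rw [Function.update_of_ne (Finset.ne_of_mem_erase hk)]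
  have hPne : P ≠ 0 := by
    intro hP0
    apply hχ j
    have h0 : ∀ i : Fin 2, χ j i = 0 := by
      intro i
      have := key i
      rw [hP0, mul_zero] at this
      exact (mul_eq_zero.mp this.symm).resolve_right hQne
    ext i; simpa using h0 i
  refine ⟨Q / P, div_ne_zero hQne hPne, ?_⟩
  ext i
  have := key i
  show ψ j i = Q / P * χ j i
  field_simp
  linear_combination this

def trunc {n : ℕ} (ψ : Fin (n+1) → Qubit) : Fin n → Qubit := fun i => ψ i.castSucc

lemma inner_tens_split {n : ℕ} (ψ χ : Fin (n+1) → Qubit) :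
    ⟪tens ψ, tens χ⟫_ℂ =
      ⟪tens (trunc ψ), tens (trunc χ)⟫_ℂ * ⟪ψ (Fin.last n), χ (Fin.last n)⟫_ℂ := by
  rw [inner_tens, inner_tens, Fin.prod_univ_castSucc]
  rfl

lemma tens_snoc_eq_of_trunc {n : ℕ} {χ : Fin n → Qubit} {ψ : Fin (n+1) → Qubit}
    (h : tens χ = tens (trunc ψ)) :
    tens (Fin.snoc χ (ψ (Fin.last n))) = tens ψ := by
  ext f
  show ∏ j, (Fin.snoc χ (ψ (Fin.last n)) : Fin (n+1) → Qubit) j (f j) = ∏ j, ψ j (f j)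
  rw [Fin.prod_univ_castSucc, Fin.prod_univ_castSucc]
  have h1 : ∀ i : Fin n, (Fin.snoc χ (ψ (Fin.last n)) : Fin (n+1) → Qubit) i.castSucc = χ i :=
    fun i => Fin.snoc_castSucc ..
  have h2 : (Fin.snoc χ (ψ (Fin.last n)) : Fin (n+1) → Qubit) (Fin.last n) = ψ (Fin.last n) :=
    Fin.snoc_last ..
  rw [h2]
  congr 1
  have hthis := congrArg (fun v : NQubit n => v (fun i => f i.castSucc)) h
  simp only [tens, trunc, PiLp.toLp_apply] at hthis
  calc ∏ i : Fin n, (Fin.snoc χ (ψ (Fin.last n)) : Fin (n+1) → Qubit) i.castSucc (f i.castSucc)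
      = ∏ i : Fin n, χ i (f i.castSucc) :=
        Finset.prod_congr rfl fun i _ => by rw [h1]
    _ = ∏ i : Fin n, ψ i.castSucc (f i.castSucc) := hthis

lemma finrank_nqubit (n : ℕ) : Module.finrank ℂ (NQubit n) = 2 ^ n := by
  rw [finrank_euclideanSpace]
  simp [Fintype.card_fun]

lemma card_onb {n : ℕ} {B : Finset (NQubit n)}
    (h1 : Orthonormal ℂ (fun v : B => (v : NQubit n)))
    (h2 : Submodule.span ℂ (B : Set (NQubit n)) = ⊤) : B.card = 2 ^ n := by
  have hb : Module.Basis B ℂ (NQubit n) :=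
    Module.Basis.mk h1.linearIndependent (by
      have hr : (Set.range fun v : ↥B => (v : NQubit n)) = (B : Set (NQubit n)) :=
        Subtype.range_val
      rw [hr]; exact h2.ge)
  have := Module.finrank_eq_card_finset_basis hb
  rw [← this, finrank_nqubit]

end Aux

/-- main induction -/
lemma key_lemma : ∀ (n : ℕ) (B : Finset (NQubit n)),
    (↑B ⊆ {v : NQubit n | IsProduct v ∧ ‖v‖ = 1}) → IsONBasis B →
    ∃! v, v ∈ B ∧ AllNorth v := by
  intro n
  induction n with
  | zero =>
    intro B hS hB
    have hc : B.card = 1 := by rw [card_onb hB.1 hB.2]; norm_num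
    obtain ⟨v, hv⟩ := Finset.card_eq_one.mp hc
    subst hv
    have hvS := hS (Finset.mem_coe.mpr (Finset.mem_singleton_self v))
    obtain ⟨⟨ψ, hψ⟩, -⟩ := hvS
    refine ⟨v, ⟨Finset.mem_singleton_self v, ⟨ψ, hψ, fun j => j.elim0⟩⟩, ?_⟩
    rintro u ⟨hu, -⟩
    exact Finset.mem_singleton.mp hu
  | succ n IH =>
    intro B hS hB
    classical
    obtain ⟨horth, hspan⟩ := hB
    have hcard : B.card = 2 ^ (n+1) := card_onb horth hspan
    have hSv : ∀ v ∈ B, IsProduct v ∧ ‖v‖ = 1 := fun v hv => hS (Finset.mem_coe.mpr hv)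
    have hfac : ∀ v : NQubit (n+1), ∃ ψ : Fin (n+1) → Qubit,
        v ∈ B → (v = tens ψ ∧ ∀ j, ‖ψ j‖ = 1) := by
      intro v
      by_cases hv : v ∈ B
      · obtain ⟨ψ, h1, h2⟩ := exists_unit_factors (hSv v hv).1 (hSv v hv).2
        exact ⟨ψ, fun _ => ⟨h1, h2⟩⟩
      · exact ⟨fun _ => 0, fun h => absurd h hv⟩
    choose F hF using hfac
    set g : NQubit (n+1) → NQubit n := fun v => tens (trunc (F v)) with hg
    set φ : NQubit (n+1) → Qubit := fun v => F v (Fin.last n) with hφ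
    have hveq : ∀ v ∈ B, v = tens (F v) := fun v hv => (hF v hv).1
    have hnorm1 : ∀ v ∈ B, ∀ j, ‖F v j‖ = 1 := fun v hv => (hF v hv).2
    have hgnorm : ∀ v ∈ B, ‖g v‖ = 1 := by
      intro v hv
      rw [hg]
      simp only
      rw [norm_tens, Finset.prod_eq_one]
      intro i _
      exact hnorm1 v hv _
    have hφnorm : ∀ v ∈ B, ‖φ v‖ = 1 := fun v hv => hnorm1 v hv _
    have hinner : ∀ u ∈ B, ∀ v ∈ B, u ≠ v → ⟪g u, g v⟫_ℂ * ⟪φ u, φ v⟫_ℂ = 0 := by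
      intro u hu v hv huv
      have hne2 : (⟨u, hu⟩ : ↥B) ≠ (⟨v, hv⟩ : ↥B) := fun h => huv (congrArg Subtype.val h)
      have h0 : ⟪u, v⟫_ℂ = 0 := horth.2 hne2
      have h0' : ⟪tens (F u), tens (F v)⟫_ℂ = 0 := by
        rw [← hveq u hu, ← hveq v hv]; exact h0
      rw [inner_tens_split] at h0'
      exact h0'
    have hkey : ∀ u ∈ B, ∀ v ∈ B, u ≠ v → (IsNorth (φ u) ↔ IsNorth (φ v)) →
        ⟪g u, g v⟫_ℂ = 0 := by
      intro u hu v hv huv hiff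
      rcases mul_eq_zero.mp (hinner u hu v hv huv) with h | h
      · exact h
      · exfalso
        have := north_xor (hφnorm u hu) (hφnorm v hv) h
        tauto
    have hginj : ∀ u ∈ B, ∀ v ∈ B, u ≠ v → (IsNorth (φ u) ↔ IsNorth (φ v)) → g u ≠ g v := by
      intro u hu v hv huv hiff heq
      have h0 := hkey u hu v hv huv hiff
      rw [heq, inner_self_eq_zero] at h0
      have h1 := hgnorm v hv
      rw [h0] at h1
      norm_num at h1
    have himg : ∀ (T' : Finset (NQubit (n+1))), T' ⊆ B →
        (∀ u ∈ T', ∀ v ∈ T', (IsNorth (φ u) ↔ IsNorth (φ v))) →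
        (T'.image g).card = T'.card ∧
          Orthonormal ℂ (fun w : (T'.image g) => (w : NQubit n)) := by
      intro T' hsub hconst
      have hinj : Set.InjOn g T' := by
        intro u hu v hv heq
        by_contra hne
        exact hginj u (hsub (Finset.mem_coe.mp hu)) v (hsub (Finset.mem_coe.mp hv)) hne
          (hconst u (Finset.mem_coe.mp hu) v (Finset.mem_coe.mp hv)) heq
      refine ⟨Finset.card_image_of_injOn hinj, ?_⟩
      constructor
      · rintro ⟨w, hw⟩
        obtain ⟨v, hv, rfl⟩ := Finset.mem_image.mp hw
        exact hgnorm v (hsub hv)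
      · rintro ⟨w1, hw1⟩ ⟨w2, hw2⟩ hne
        obtain ⟨u, hu, rfl⟩ := Finset.mem_image.mp hw1
        obtain ⟨v, hv, rfl⟩ := Finset.mem_image.mp hw2
        have huv : u ≠ v := by
          rintro rfl
          exact hne rfl
        exact hkey u (hsub hu) v (hsub hv) huv (hconst u hu v hv)
    set T : Finset (NQubit (n+1)) := B.filter (fun v => IsNorth (φ v)) with hT
    set T2 : Finset (NQubit (n+1)) := B.filter (fun v => ¬ IsNorth (φ v)) with hT2
    have hTsub : T ⊆ B := Finset.filter_subset _ _
    have hT2sub : T2 ⊆ B := Finset.filter_subset _ _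
    obtain ⟨hc1, ho1⟩ := himg T hTsub (by
      intro u hu v hv
      simp only [hT, Finset.mem_filter] at hu hv
      exact iff_of_true hu.2 hv.2)
    obtain ⟨hc2, ho2⟩ := himg T2 hT2sub (by
      intro u hu v hv
      simp only [hT2, Finset.mem_filter] at hu hv
      exact iff_of_false hu.2 hv.2)
    have hle1 : T.card ≤ 2 ^ n := by
      have := ho1.linearIndependent.fintype_card_le_finrank
      rw [Fintype.card_coe, hc1, finrank_nqubit] at this
      exact this
    have hle2 : T2.card ≤ 2 ^ n := by
      have := ho2.linearIndependent.fintype_card_le_finrank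
      rw [Fintype.card_coe, hc2, finrank_nqubit] at this
      exact this
    have hsplit : T.card + T2.card = 2 ^ (n+1) := by
      rw [hT, hT2, Finset.card_filter_add_card_filter_not, hcard]
    have hTcard : T.card = 2 ^ n := by
      have h2n : (2:ℕ) ^ (n+1) = 2 ^ n + 2 ^ n := by ring
      omega
    set That : Finset (NQubit n) := T.image g with hThat
    have hThatcard : That.card = 2 ^ n := by rw [hThat, hc1, hTcard]
    have hspan2 : Submodule.span ℂ (That : Set (NQubit n)) = ⊤ := by
      have hli := ho1.linearIndependent
      have h := hli.span_eq_top_of_card_eq_finrank'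
        (by rw [Fintype.card_coe, hThatcard, finrank_nqubit])
      have hr : (Set.range fun w : ↥That => (w : NQubit n)) = (That : Set (NQubit n)) :=
        Subtype.range_val
      rw [hr] at h
      exact h
    have hThatS : ↑That ⊆ {w : NQubit n | IsProduct w ∧ ‖w‖ = 1} := by
      intro w hw
      obtain ⟨v, hv, rfl⟩ := Finset.mem_image.mp (Finset.mem_coe.mp hw)
      exact ⟨⟨trunc (F v), rfl⟩, hgnorm v (hTsub hv)⟩
    obtain ⟨w₀, ⟨hw₀T, hw₀N⟩, hw₀u⟩ := IH That hThatS ⟨ho1, hspan2⟩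
    obtain ⟨v₀, hv₀T, hgv₀⟩ := Finset.mem_image.mp hw₀T
    have hv₀B : v₀ ∈ B := hTsub hv₀T
    have hv₀N : AllNorth v₀ := by
      obtain ⟨χ, hχeq, hχN⟩ := hw₀N
      have h1 : tens χ = tens (trunc (F v₀)) := by rw [← hχeq, ← hgv₀]
      refine ⟨Fin.snoc χ (F v₀ (Fin.last n)), ?_, ?_⟩
      · rw [tens_snoc_eq_of_trunc h1, ← hveq v₀ hv₀B]
      · intro j
        refine Fin.lastCases ?_ ?_ j
        · rw [Fin.snoc_last]
          exact (Finset.mem_filter.mp hv₀T).2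
        · intro i
          rw [Fin.snoc_castSucc]
          exact hχN i
    refine ⟨v₀, ⟨hv₀B, hv₀N⟩, ?_⟩
    rintro v ⟨hvB, hvN⟩
    have hFN : ∀ j, IsNorth (F v j) := by
      obtain ⟨χ, hχeq, hχN⟩ := hvN
      have hne : tens (F v) ≠ 0 := by
        intro h0
        have h1 : ‖tens (F v)‖ = 1 := by rw [← hveq v hvB]; exact (hSv v hvB).2
        rw [h0] at h1
        norm_num at h1
      have h1 : tens χ = tens (F v) := by rw [← hχeq]; exact hveq v hvB
      intro j
      obtain ⟨c, hc, hceq⟩ := factor_proportional h1 hne j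
      exact (isNorth_smul hc (F v j)).mp (hceq ▸ hχN j)
    have hvT : v ∈ T := Finset.mem_filter.mpr ⟨hvB, hFN _⟩
    have hgvN : AllNorth (g v) := ⟨trunc (F v), rfl, fun i => hFN _⟩
    have hgveq : g v = w₀ := hw₀u (g v) ⟨Finset.mem_image_of_mem g hvT, hgvN⟩
    by_contra hne
    have h0 := hkey v hvB v₀ hv₀B hne
      (iff_of_true ((Finset.mem_filter.mp hvT).2) ((Finset.mem_filter.mp hv₀T).2))
    rw [hgveq, hgv₀, inner_self_eq_zero] at h0
    have h1 : ‖w₀‖ = 1 := by rw [← hgv₀]; exact hgnorm v₀ hv₀B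
    rw [h0] at h1
    norm_num at h1

/-- the map assigning value `1` exactly to all-north product unit vectors is
a KS-colouring of the set of all product unit vectors of `(ℂ²)^{⊗n}`: every orthonormal
basis consisting of product vectors contains exactly one all-north vector, and no two
mutually orthogonal product unit vectors are both all-north. -/
theorem allNorth_isKSColouring_of_product_rays (n : ℕ) :
    IsKSColouring {v : NQubit n | IsProduct v ∧ ‖v‖ = 1} (fun v => AllNorth v) := by
  constructor
  · exact key_lemma n
  · rintro ψ hψ χ hχ hinner ⟨⟨α, hαeq, hαN⟩, ⟨β, hβeq, hβN⟩⟩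
    rw [hαeq, hβeq, inner_tens] at hinner
    obtain ⟨j, -, hj⟩ := Finset.prod_eq_zero_iff.mp hinner
    have hα0 : α j ≠ 0 := fun h => (by simpa [blochX, blochY, blochZ, h, IsNorth] using hαN j)
    have hβ0 : β j ≠ 0 := fun h => (by simpa [blochX, blochY, blochZ, h, IsNorth] using hβN j)
    set a : Qubit := ((‖α j‖ : ℂ))⁻¹ • α j with ha
    set b : Qubit := ((‖β j‖ : ℂ))⁻¹ • β j with hb
    have hana : ‖a‖ = 1 := by
      rw [ha, norm_smul]
      simp [norm_ne_zero_iff.mpr hα0]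
    have hbnb : ‖b‖ = 1 := by
      rw [hb, norm_smul]
      simp [norm_ne_zero_iff.mpr hβ0]
    have hab : ⟪a, b⟫_ℂ = 0 := by
      rw [ha, hb, inner_smul_left, inner_smul_right, hj]
      ring
    have hca : ((‖α j‖ : ℂ))⁻¹ ≠ 0 := by
      simp [norm_ne_zero_iff.mpr hα0]
    have hcb : ((‖β j‖ : ℂ))⁻¹ ≠ 0 := by
      simp [norm_ne_zero_iff.mpr hβ0]
    have hNa : IsNorth a := (isNorth_smul hca (α j)).mpr (hαN j)
    have hNb : IsNorth b := (isNorth_smul hcb (β j)).mpr (hβN j)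
    exact (north_xor hana hbnb hab).mp hNa hNb


end
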